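/- The map (X,Y) ↦ f_{X,Y} is a bijection from the set of ordered pairs (X,Y) of subsets of [n] with X ≤ Y in P_n onto the Catalan monoid C_{n+1}. -/

import Mathlib

/-- `X ≤ Y` in the poset `Pₙ`: writing `X = {x₁ < ⋯ < x_k}` and `Y = {y₁ < ⋯ < y_l}`,
we require `k = l` and `xᵢ ≤ yᵢ` for all `i` (encoded via `List.Forall₂` on the
sorted enumerations, which forces in particular `|X| = |Y|`). -/
def Ple {α : Type*} [LinearOrder α] (X Y : Finset α) : Prop :=
  List.Forall₂ (· ≤ ·) (X.sort (· ≤ ·)) (Y.sort (· ≤ ·))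

/-- The map `f_{X,Y} : [n+1] → [n+1]` (with `[n+1]` modelled as `Fin (n+1)` and
`[n] ⊆ [n+1]` as the finsets avoiding `Fin.last n`).  Writing `X = {x₁ < ⋯ < x_k}` and
`Y = {y₁ < ⋯ < y_k}`, we have `f_{X,Y}(i) = y₁` for `i ≤ x₁`, `f_{X,Y}(i) = y_j` for
`x_{j-1} < i ≤ x_j`, and `f_{X,Y}(i) = n+1` for `i > x_k`: indeed, the number `c` of
elements of `X` that are `< i` equals `j - 1` exactly when `x_{j-1} < i ≤ x_j`, and the
`(c+1)`-st smallest element of `Y` is produced when `c < |Y|`. -/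
def fXY {n : ℕ} (X Y : Finset (Fin (n+1))) (i : Fin (n+1)) : Fin (n+1) :=
  if h : (X.filter (fun x => x < i)).card < (Y.sort (· ≤ ·)).length then
    (Y.sort (· ≤ ·)).get ⟨(X.filter (fun x => x < i)).card, h⟩
  else Fin.last n

namespace CatAux

/-- down-closed finset of `Fin k`: membership iff index below card -/
lemma downclosed_mem_iff {k : ℕ} {S : Finset (Fin k)}
    (hS : ∀ ⦃a b : Fin k⦄, a ≤ b → b ∈ S → a ∈ S) {j : Fin k} :
    j ∈ S ↔ (j : ℕ) < S.card := by
  constructor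
  · intro hj
    have hsub : Finset.Iic j ⊆ S := fun a ha => hS (Finset.mem_Iic.mp ha) hj
    have := Finset.card_le_card hsub
    rw [Fin.card_Iic] at this
    omega
  · intro hj
    by_contra hjS
    have hsub : S ⊆ Finset.Iio j := fun a ha =>
      Finset.mem_Iio.mpr (lt_of_not_ge fun hle => hjS (hS hle ha))
    have := Finset.card_le_card hsub
    rw [Fin.card_Iio] at this
    omega

variable {n : ℕ}

lemma cnt_eq_card (X : Finset (Fin (n+1))) (i : Fin (n+1)) :
    ((Finset.univ.filter
      (fun j : Fin (X.sort (· ≤ ·)).length => (X.sort (· ≤ ·)).get j < i)).card)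
    = (X.filter (fun x => x < i)).card := by
  apply Finset.card_bij (fun j _ => (X.sort (· ≤ ·)).get j)
  · intro j hj
    simp only [Finset.mem_filter, Finset.mem_univ, true_and] at hj ⊢
    exact ⟨(Finset.mem_sort (· ≤ ·)).mp (List.get_mem _ j), hj⟩
  · intro a ha b hb hab
    exact (List.nodup_iff_injective_get.mp (X.sort_nodup (· ≤ ·))) hab
  · intro x hx
    simp only [Finset.mem_filter] at hx
    obtain ⟨j, hj⟩ := List.mem_iff_get.mp ((Finset.mem_sort (· ≤ ·)).mpr hx.1)
    refine ⟨j, ?_, hj⟩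
    simp only [Finset.mem_filter, Finset.mem_univ, true_and]
    rw [hj]; exact hx.2

lemma get_lt_iff (X : Finset (Fin (n+1))) (i : Fin (n+1)) {j : ℕ}
    (h : j < (X.sort (· ≤ ·)).length) :
    (X.sort (· ≤ ·)).get ⟨j, h⟩ < i ↔ j < (X.filter (fun x => x < i)).card := by
  rw [← cnt_eq_card]
  have hdc : ∀ ⦃a b : Fin (X.sort (· ≤ ·)).length⦄, a ≤ b →
      b ∈ Finset.univ.filter (fun j => (X.sort (· ≤ ·)).get j < i) →
      a ∈ Finset.univ.filter (fun j => (X.sort (· ≤ ·)).get j < i) := by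
    intro a b hab hb
    simp only [Finset.mem_filter, Finset.mem_univ, true_and] at hb ⊢
    exact lt_of_le_of_lt ((X.pairwise_sort (· ≤ ·)).sortedLE.monotone_get hab) hb
  have := downclosed_mem_iff hdc (j := ⟨j, h⟩)
  simp only [Finset.mem_filter, Finset.mem_univ, true_and] at this
  exact this

lemma le_get_cnt (X : Finset (Fin (n+1))) (i : Fin (n+1))
    (h : (X.filter (fun x => x < i)).card < (X.sort (· ≤ ·)).length) :
    i ≤ (X.sort (· ≤ ·)).get ⟨(X.filter (fun x => x < i)).card, h⟩ :=
  le_of_not_gt fun hlt => lt_irrefl _ ((get_lt_iff X i h).mp hlt)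

lemma cnt_get (X : Finset (Fin (n+1))) {j : ℕ} (h : j < (X.sort (· ≤ ·)).length) :
    (X.filter (fun x => x < (X.sort (· ≤ ·)).get ⟨j, h⟩)).card = j := by
  set i := (X.sort (· ≤ ·)).get ⟨j, h⟩ with hi
  have h1 : ¬ j < (X.filter (fun x => x < i)).card :=
    fun hh => lt_irrefl _ ((get_lt_iff X i h).mpr hh)
  have h2 : ¬ (X.filter (fun x => x < i)).card < j := by
    intro hh
    have hcl : (X.filter (fun x => x < i)).card < (X.sort (· ≤ ·)).length := lt_trans hh h
    have hlt : (X.sort (· ≤ ·)).get ⟨_, hcl⟩ < i :=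
      (X.sortedLT_sort).strictMono_get (show (⟨_, hcl⟩ : Fin _) < ⟨j, h⟩ from hh)
    exact lt_irrefl _ ((get_lt_iff X i hcl).mp hlt)
  omega

lemma cnt_mono (X : Finset (Fin (n+1))) {i j : Fin (n+1)} (h : i ≤ j) :
    (X.filter (fun x => x < i)).card ≤ (X.filter (fun x => x < j)).card :=
  Finset.card_le_card (Finset.monotone_filter_right X (fun x _ hx => lt_of_lt_of_le hx h))

lemma fXY_monotone (X Y : Finset (Fin (n+1))) : Monotone (fXY X Y) := by
  intro i j hij
  have hc := cnt_mono X hij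
  unfold fXY
  split_ifs with h1 h2 h2
  · exact (Y.pairwise_sort (· ≤ ·)).sortedLE.monotone_get (Fin.mk_le_mk.mpr hc)
  · exact Fin.le_last _
  · omega
  · exact le_refl _

lemma le_fXY {X Y : Finset (Fin (n+1))} (hXY : Ple X Y) (i : Fin (n+1)) :
    i ≤ fXY X Y i := by
  have hlen : (X.sort (· ≤ ·)).length = (Y.sort (· ≤ ·)).length := hXY.length_eq
  unfold fXY
  split_ifs with h1
  · have hx : (X.filter (fun x => x < i)).card < (X.sort (· ≤ ·)).length := hlen ▸ h1
    exact le_trans (le_get_cnt X i hx) ((List.forall₂_iff_get.mp hXY).2 _ hx h1)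
  · exact Fin.le_last _

/-- the set of "jump points" of `f` -/
def XfSet (f : Fin (n+1) → Fin (n+1)) : Finset (Fin (n+1)) :=
  Finset.univ.filter (fun i => f i < f (i+1))

def YfSet (f : Fin (n+1) → Fin (n+1)) : Finset (Fin (n+1)) := (XfSet f).image f

lemma mem_XfSet {f : Fin (n+1) → Fin (n+1)} {i : Fin (n+1)} :
    i ∈ XfSet f ↔ f i < f (i+1) := by simp [XfSet]

lemma f_last {f : Fin (n+1) → Fin (n+1)} (hle : ∀ i, i ≤ f i) :
    f (Fin.last n) = Fin.last n :=
  le_antisymm (Fin.le_last _) (hle _)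

lemma last_not_mem_XfSet {f : Fin (n+1) → Fin (n+1)} (hle : ∀ i, i ≤ f i) :
    Fin.last n ∉ XfSet f := by
  rw [mem_XfSet, f_last hle]
  exact not_lt.mpr (Fin.le_last _)

lemma last_not_mem_YfSet {f : Fin (n+1) → Fin (n+1)} (hle : ∀ i, i ≤ f i) :
    Fin.last n ∉ YfSet f := by
  intro h
  obtain ⟨x, hx, hfx⟩ := Finset.mem_image.mp h
  rw [mem_XfSet, hfx] at hx
  exact absurd hx (not_lt.mpr (Fin.le_last _))

lemma f_strict {f : Fin (n+1) → Fin (n+1)} (hf : Monotone f) {x x' : Fin (n+1)}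
    (hx : f x < f (x+1)) (hxx : x < x') : f x < f x' := by
  have hxl : (x : ℕ) < n := by
    have := hxx.trans_le (Fin.le_last _)
    have h2 := Fin.lt_def.mp hxx
    have h3 := x'.isLt
    omega
  have hv : ((x + 1 : Fin (n+1)) : ℕ) = x + 1 :=
    Fin.val_add_one_of_lt (by rw [Fin.lt_def]; simpa using hxl)
  have : x + 1 ≤ x' := by
    rw [Fin.le_def, hv]
    exact Fin.lt_def.mp hxx
  exact lt_of_lt_of_le hx (hf this)

lemma f_strictMonoOn {f : Fin (n+1) → Fin (n+1)} (hf : Monotone f) :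
    StrictMonoOn f (XfSet f : Set (Fin (n+1))) := by
  intro x hx x' _ hxx
  exact f_strict hf (mem_XfSet.mp (by exact_mod_cast hx)) hxx

lemma f_const {f : Fin (n+1) → Fin (n+1)} (hf : Monotone f) (a b : Fin (n+1))
    (hab : a ≤ b) (h : ∀ t, a ≤ t → t < b → ¬ f t < f (t+1)) : f a = f b := by
  obtain ⟨d, hd⟩ : ∃ d, (b : ℕ) - a = d := ⟨_, rfl⟩
  induction d generalizing a with
  | zero =>
    have : a = b := Fin.le_antisymm hab (by rw [Fin.le_def]; have := Fin.le_def.mp hab; omega)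
    rw [this]
  | succ d ih =>
    have hab' : a < b := by rw [Fin.lt_def]; have := Fin.le_def.mp hab; omega
    have hal : a < Fin.last n := lt_of_lt_of_le hab' (Fin.le_last _)
    have hva : ((a + 1 : Fin (n+1)) : ℕ) = (a : ℕ) + 1 := Fin.val_add_one_of_lt hal
    have h1 : f a = f (a+1) :=
      le_antisymm (hf (by rw [Fin.le_def, hva]; omega)) (le_of_not_gt (h a le_rfl hab'))
    rw [h1]
    exact ih (a+1) (by rw [Fin.le_def, hva]; have := Fin.lt_def.mp hab'; omega)
      (fun t ht htb => h t (le_trans (by rw [Fin.le_def, hva]; omega) ht) htb)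
      (by rw [hva]; omega)

lemma sort_image {X : Finset (Fin (n+1))} {f : Fin (n+1) → Fin (n+1)} (hf : Monotone f)
    (hinj : Set.InjOn f (X : Set (Fin (n+1)))) :
    (X.image f).sort (· ≤ ·) = (X.sort (· ≤ ·)).map f := by
  apply List.Perm.eq_of_pairwise' (Finset.pairwise_sort _ _) ?_ ?_
  · exact List.Pairwise.map f (fun a b hab => hf hab) (X.pairwise_sort (· ≤ ·))
  · apply Multiset.coe_eq_coe.mp
    calc ((X.image f).sort (· ≤ ·) : Multiset (Fin (n+1))) = (X.image f).val :=
          Finset.sort_eq _ _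
      _ = X.val.map f := Finset.image_val_of_injOn hinj
      _ = ((X.sort (· ≤ ·)).map f : Multiset (Fin (n+1))) := by
          rw [← Finset.sort_eq X (· ≤ ·), Multiset.map_coe]

lemma injOn_of_mem_XfSet {f : Fin (n+1) → Fin (n+1)} (hf : Monotone f) :
    Set.InjOn f ((XfSet f) : Set (Fin (n+1))) :=
  (f_strictMonoOn hf).injOn

lemma sort_YfSet {f : Fin (n+1) → Fin (n+1)} (hf : Monotone f) :
    (YfSet f).sort (· ≤ ·) = ((XfSet f).sort (· ≤ ·)).map f :=
  sort_image hf (injOn_of_mem_XfSet hf)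

lemma ple_XfSet_YfSet {f : Fin (n+1) → Fin (n+1)} (hf : Monotone f)
    (hle : ∀ i, i ≤ f i) : Ple (XfSet f) (YfSet f) := by
  unfold Ple
  rw [sort_YfSet hf]
  rw [List.forall₂_map_right_iff]
  exact (List.forall₂_same).mpr (fun x _ => hle x)

lemma fXY_XfSet_YfSet {f : Fin (n+1) → Fin (n+1)} (hf : Monotone f)
    (hle : ∀ i, i ≤ f i) : fXY (XfSet f) (YfSet f) = f := by
  funext i
  set X := XfSet f with hXdef
  set c := (X.filter (fun x => x < i)).card with hc
  have hsort := sort_YfSet hf (n := n)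
  have hlen : (X.sort (· ≤ ·)).length = ((YfSet f).sort (· ≤ ·)).length := by
    rw [hsort, List.length_map]
  unfold fXY
  split_ifs with h1
  · have hx : c < (X.sort (· ≤ ·)).length := hlen ▸ h1
    set x := (X.sort (· ≤ ·)).get ⟨c, hx⟩ with hxdef
    have hgety : ((YfSet f).sort (· ≤ ·)).get ⟨c, h1⟩ = f x := by
      rw [List.get_eq_getElem]
      simp only [hsort, List.getElem_map]
      rw [hxdef, List.get_eq_getElem]
    rw [hgety]
    have hix : i ≤ x := le_get_cnt X i hx
    have hconst : f i = f x := by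
      apply f_const hf i x hix
      intro t hit htx hft
      have htX : t ∈ X := mem_XfSet.mpr hft
      obtain ⟨j, hj⟩ := List.mem_iff_get.mp ((Finset.mem_sort (· ≤ ·)).mpr htX)
      have hjc : (j : ℕ) < c := by
        have := (X.sortedLT_sort).strictMono_get (a := j) (b := ⟨c, hx⟩)
        rw [hj] at this
        have h2 : (j : Fin _) < (⟨c, hx⟩ : Fin _) := by
          by_contra hcon
          push_neg at hcon
          have := (X.pairwise_sort (· ≤ ·)).sortedLE.monotone_get hcon
          rw [hj] at this
          exact absurd (lt_of_lt_of_le htx this) (lt_irrefl t)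
        exact h2
      have : t < i := by
        have := (get_lt_iff X i j.isLt).mpr (by rw [← hc]; exact hjc)
        rwa [hj] at this
      exact absurd hit (not_le.mpr this)
    exact hconst.symm
  · -- c ≥ length, so all of X is < i, f is constant = last from i on
    push_neg at h1
    have hcard : (X.sort (· ≤ ·)).length = X.card := Finset.length_sort _
    have hXsub : X.filter (fun x => x < i) = X := by
      apply Finset.eq_of_subset_of_card_le (Finset.filter_subset _ _)
      rw [← hcard, hlen]; exact h1
    have hall : ∀ t ∈ X, t < i := by
      intro t ht
      have : t ∈ X.filter (fun x => x < i) := by rw [hXsub]; exact ht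
      exact (Finset.mem_filter.mp this).2
    have : f i = f (Fin.last n) := by
      apply f_const hf i (Fin.last n) (Fin.le_last _)
      intro t hit _ hft
      exact absurd hit (not_le.mpr (hall t (mem_XfSet.mpr hft)))
    rw [this, f_last hle]

lemma fXY_get {X Y : Finset (Fin (n+1))} (hXY : Ple X Y) {j : ℕ}
    (h : j < (X.sort (· ≤ ·)).length) :
    fXY X Y ((X.sort (· ≤ ·)).get ⟨j, h⟩)
      = (Y.sort (· ≤ ·)).get ⟨j, hXY.length_eq ▸ h⟩ := by
  unfold fXY
  have hc := cnt_get X h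
  simp only [hc]
  rw [dif_pos (hXY.length_eq ▸ h)]

lemma XfSet_fXY {X Y : Finset (Fin (n+1))} (hX : Fin.last n ∉ X) (hY : Fin.last n ∉ Y)
    (hXY : Ple X Y) : XfSet (fXY X Y) = X := by
  have hlen : (X.sort (· ≤ ·)).length = (Y.sort (· ≤ ·)).length := hXY.length_eq
  ext i
  rw [mem_XfSet]
  by_cases hil : i = Fin.last n
  · subst hil
    constructor
    · intro hcon
      rw [f_last (le_fXY hXY)] at hcon
      exact absurd hcon (not_lt.mpr (Fin.le_last _))
    · intro h; exact absurd h hX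
  · have hilt : (i : ℕ) < n := by
      have h1 := i.isLt
      have h2 : (i : ℕ) ≠ n := fun hh => hil (Fin.ext (by simp [hh, Fin.val_last]))
      omega
    have hv : ((i + 1 : Fin (n+1)) : ℕ) = (i : ℕ) + 1 :=
      Fin.val_add_one_of_lt (by rw [Fin.lt_def, Fin.val_last]; exact hilt)
    have hlt1 : ∀ x : Fin (n+1), x < i + 1 ↔ x ≤ i := fun x => by
      rw [Fin.lt_def, Fin.le_def, hv]; omega
    have hsplit : X.filter (fun x => x < i + 1)
        = if i ∈ X then insert i (X.filter (fun x => x < i))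
          else X.filter (fun x => x < i) := by
      split_ifs with hiX
      · ext x
        simp only [Finset.mem_filter, Finset.mem_insert, hlt1]
        constructor
        · rintro ⟨hxX, hxle⟩
          rcases eq_or_lt_of_le hxle with hh | hh
          · exact Or.inl hh
          · exact Or.inr ⟨hxX, hh⟩
        · rintro (rfl | ⟨hxX, hxlt⟩)
          · exact ⟨hiX, le_refl _⟩
          · exact ⟨hxX, le_of_lt hxlt⟩
      · ext x
        simp only [Finset.mem_filter, hlt1]
        constructor
        · rintro ⟨hxX, hxle⟩
          exact ⟨hxX, lt_of_le_of_ne hxle fun hh => hiX (hh ▸ hxX)⟩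
        · rintro ⟨hxX, hxlt⟩; exact ⟨hxX, le_of_lt hxlt⟩
    constructor
    · intro hlt
      by_contra hiX
      have heq : X.filter (fun x => x < i + 1) = X.filter (fun x => x < i) := by
        rw [hsplit, if_neg hiX]
      have : fXY X Y (i + 1) = fXY X Y i := by unfold fXY; rw [heq]
      rw [this] at hlt
      exact lt_irrefl _ hlt
    · intro hiX
      obtain ⟨j, hj⟩ := List.mem_iff_get.mp ((Finset.mem_sort (· ≤ ·)).mpr hiX)
      have hfi : fXY X Y i = (Y.sort (· ≤ ·)).get ⟨(j : ℕ), hlen ▸ j.isLt⟩ := by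
        rw [← hj]
        have := fXY_get hXY j.isLt
        simpa using this
      have hcnt : (X.filter (fun x => x < i)).card = (j : ℕ) := by
        rw [← hj]
        have := cnt_get X j.isLt
        simpa using this
      have hcnt1 : (X.filter (fun x => x < i + 1)).card = (j : ℕ) + 1 := by
        rw [hsplit, if_pos hiX,
          Finset.card_insert_of_notMem (by simp [Finset.mem_filter]), hcnt]
      rw [hfi]
      by_cases hj1 : (j : ℕ) + 1 < (Y.sort (· ≤ ·)).length
      · have hfi1 : fXY X Y (i + 1) = (Y.sort (· ≤ ·)).get ⟨(j : ℕ) + 1, hj1⟩ := by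
          unfold fXY
          simp only [hcnt1]
          rw [dif_pos hj1]
        rw [hfi1]
        exact (Y.sortedLT_sort).strictMono_get (Fin.mk_lt_mk.mpr (Nat.lt_succ_self _))
      · have hfi1 : fXY X Y (i + 1) = Fin.last n := by
          unfold fXY
          simp only [hcnt1]
          rw [dif_neg hj1]
        rw [hfi1]
        have hmem : (Y.sort (· ≤ ·)).get ⟨(j : ℕ), hlen ▸ j.isLt⟩ ∈ Y :=
          (Finset.mem_sort (· ≤ ·)).mp (List.get_mem _ _)
        exact lt_of_le_of_ne (Fin.le_last _) (fun hh => hY (hh ▸ hmem))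

lemma YfSet_fXY {X Y : Finset (Fin (n+1))} (hX : Fin.last n ∉ X) (hY : Fin.last n ∉ Y)
    (hXY : Ple X Y) : YfSet (fXY X Y) = Y := by
  have hlen : (X.sort (· ≤ ·)).length = (Y.sort (· ≤ ·)).length := hXY.length_eq
  rw [YfSet, XfSet_fXY hX hY hXY]
  have hsub : X.image (fXY X Y) ⊆ Y := by
    intro y hy
    obtain ⟨x, hx, rfl⟩ := Finset.mem_image.mp hy
    obtain ⟨j, hj⟩ := List.mem_iff_get.mp ((Finset.mem_sort (· ≤ ·)).mpr hx)
    rw [← hj]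
    have := fXY_get hXY j.isLt
    simp only [Fin.eta] at this
    rw [this]
    exact (Finset.mem_sort (· ≤ ·)).mp (List.get_mem _ _)
  have hinj : Set.InjOn (fXY X Y) (X : Set (Fin (n+1))) := by
    intro a ha b hb hab
    obtain ⟨ja, hja⟩ := List.mem_iff_get.mp ((Finset.mem_sort (· ≤ ·)).mpr ha)
    obtain ⟨jb, hjb⟩ := List.mem_iff_get.mp ((Finset.mem_sort (· ≤ ·)).mpr hb)
    rw [← hja, ← hjb] at hab
    have hga := fXY_get hXY ja.isLt
    have hgb := fXY_get hXY jb.isLt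
    simp only [Fin.eta] at hga hgb
    rw [hga, hgb] at hab
    have := List.nodup_iff_injective_get.mp (Y.sort_nodup (· ≤ ·)) hab
    have hjj : (ja : ℕ) = (jb : ℕ) := by
      have h2 := congrArg Fin.val this
      simpa using h2
    rw [← hja, ← hjb]
    congr 1
    exact Fin.ext hjj
  have hcard : (X.image (fXY X Y)).card = X.card := Finset.card_image_of_injOn hinj
  have hXY' : X.card = Y.card := by
    have h1 : (X.sort (· ≤ ·)).length = X.card := Finset.length_sort _
    have h2 : (Y.sort (· ≤ ·)).length = Y.card := Finset.length_sort _
    omega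
  exact Finset.eq_of_subset_of_card_le hsub (by rw [hcard, ← hXY'])

end CatAux

/-- `(X, Y) ↦ f_{X,Y}` is a bijection from the set of ordered pairs of subsets of `[n]`
with `X ≤ Y` in `Pₙ` onto the Catalan monoid `C_{n+1}` (the set of order-preserving,
weakly increasing self-maps of `[n+1]`). -/


theorem fXY_bijOn (n : ℕ) :
    Set.BijOn (fun p : Finset (Fin (n+1)) × Finset (Fin (n+1)) => fXY p.1 p.2)
      {p | Fin.last n ∉ p.1 ∧ Fin.last n ∉ p.2 ∧ Ple p.1 p.2}
      {f | Monotone f ∧ ∀ i, i ≤ f i} := by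
  apply Set.InvOn.bijOn (f' := fun f => (CatAux.XfSet f, CatAux.YfSet f))
  · constructor
    · rintro ⟨X, Y⟩ ⟨hX, hY, hXY⟩
      simp only
      exact Prod.ext (CatAux.XfSet_fXY hX hY hXY) (CatAux.YfSet_fXY hX hY hXY)
    · rintro f ⟨hf, hle⟩
      exact CatAux.fXY_XfSet_YfSet hf hle
  · rintro ⟨X, Y⟩ ⟨hX, hY, hXY⟩
    exact ⟨CatAux.fXY_monotone X Y, CatAux.le_fXY hXY⟩
  · rintro f ⟨hf, hle⟩
    exact ⟨CatAux.last_not_mem_XfSet hle, CatAux.last_not_mem_YfSet hle,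
      CatAux.ple_XfSet_YfSet hf hle⟩
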